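/- In the r-dimensional (H2) construction, for 1 ≤ i < j ≤ r, setting A = α1+···+α_{r−i+1} and B = α1+···+α_{r−j+1}, one has E[S_i·S_j]/(E[S_i]+E[S_j]−E[S_i·S_j]) · sqrt((2E[S_i]/E[S_i²] − 1)(2E[S_j]/E[S_j²] − 1)) = 2·sqrt(1+A)·(1+B)^{3/2} / (2(1+B)² + (2+B)(A−B)). -/

import Mathlib

open MeasureTheory ProbabilityTheory Real Filter

/-- The density of a Beta(a,b) random variable on (0,1). -/
noncomputable def betaPDFReal (a b x : ℝ) : ℝ :=
  if 0 < x ∧ x < 1 then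
    (Real.Gamma (a + b) / (Real.Gamma a * Real.Gamma b)) * x ^ (a - 1) * (1 - x) ^ (b - 1)
  else 0

/-- The Beta(a,b) probability measure on ℝ. -/
noncomputable def betaMeasure (a b : ℝ) : Measure ℝ :=
  MeasureTheory.volume.withDensity (fun x => ENNReal.ofReal (_root_.betaPDFReal a b x))

/-- `X` is a beta random variable with parameters `(a, b)` on `(Ω, μ)`. -/
def HasBetaLaw {Ω : Type*} [MeasurableSpace Ω] (μ : Measure Ω) (X : Ω → ℝ) (a b : ℝ) : Prop :=
  Measurable X ∧ μ.map X = _root_.betaMeasure a b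

lemma realBetaIntegral {s t : ℝ} (hs : 0 < s) (ht : 0 < t) :
    ∫ x in (0:ℝ)..1, x ^ (s-1) * (1-x) ^ (t-1)
      = Real.Gamma s * Real.Gamma t / Real.Gamma (s+t) := by
  have hst : 0 < s + t := by linarith
  have hG : Real.Gamma (s+t) ≠ 0 := (Real.Gamma_pos_of_pos hst).ne'
  have hbeta : Complex.betaIntegral s t
      = ((∫ x in (0:ℝ)..1, x ^ (s-1) * (1-x) ^ (t-1) : ℝ) : ℂ) := by
    rw [Complex.betaIntegral, ← intervalIntegral.integral_ofReal]
    apply intervalIntegral.integral_congr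
    intro x hx
    rw [Set.uIcc_of_le (by norm_num : (0:ℝ) ≤ 1)] at hx
    obtain ⟨hx0, hx1⟩ := hx
    simp only []
    rw [Complex.ofReal_mul, Complex.ofReal_cpow hx0,
      Complex.ofReal_cpow (by linarith : (0:ℝ) ≤ 1 - x)]
    push_cast
    ring
  have key := Complex.Gamma_mul_Gamma_eq_betaIntegral
    (s := (s:ℂ)) (t := (t:ℂ)) (by simpa using hs) (by simpa using ht)
  rw [hbeta, ← Complex.ofReal_add, Complex.Gamma_ofReal, Complex.Gamma_ofReal,
    Complex.Gamma_ofReal, ← Complex.ofReal_mul, ← Complex.ofReal_mul] at key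
  have := Complex.ofReal_injective key
  field_simp
  linarith [this]

lemma betaPDFReal_measurable (a b : ℝ) : Measurable (_root_.betaPDFReal a b) := by
  unfold _root_.betaPDFReal
  have hs : MeasurableSet {x : ℝ | 0 < x ∧ x < 1} := by
    have : {x : ℝ | 0 < x ∧ x < 1} = Set.Ioo 0 1 := rfl
    rw [this]; exact measurableSet_Ioo
  apply Measurable.ite hs
  · fun_prop
  · fun_prop

lemma betaMeasure_integral_pow {a b : ℝ} (ha : 0 < a) (hb : 0 < b) (n : ℕ) :
    ∫ x, x ^ n ∂(_root_.betaMeasure a b)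
      = Real.Gamma (a+b) * Real.Gamma (a+n) / (Real.Gamma a * Real.Gamma (a+b+n)) := by
  have hmeas : Measurable (fun x => (_root_.betaPDFReal a b x).toNNReal) :=
    (betaPDFReal_measurable a b).real_toNNReal
  have h1 : _root_.betaMeasure a b
      = MeasureTheory.volume.withDensity (fun x => ((_root_.betaPDFReal a b x).toNNReal : ENNReal)) := by
    unfold _root_.betaMeasure
    congr 1
  rw [h1, integral_withDensity_eq_integral_smul hmeas]
  have h2 : (fun x : ℝ => (_root_.betaPDFReal a b x).toNNReal • x ^ n)
      = Set.indicator (Set.Ioo (0:ℝ) 1)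
        (fun x => (Real.Gamma (a + b) / (Real.Gamma a * Real.Gamma b)) *
          (x ^ (a + n - 1) * (1 - x) ^ (b - 1))) := by
    ext x
    by_cases hx : 0 < x ∧ x < 1
    · rw [Set.indicator_of_mem (by exact hx)]
      obtain ⟨hx0, hx1⟩ := hx
      have hGa := Real.Gamma_pos_of_pos ha
      have hGb := Real.Gamma_pos_of_pos hb
      have hGab := Real.Gamma_pos_of_pos (show (0:ℝ) < a + b by linarith)
      have hx0' : (0:ℝ) < x := hx0
      have h1x : (0:ℝ) < 1 - x := by linarith
      simp only [_root_.betaPDFReal, if_pos (⟨hx0, hx1⟩ : 0 < x ∧ x < 1), NNReal.smul_def, smul_eq_mul]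
      rw [Real.coe_toNNReal _ (by positivity)]
      rw [show a + n - 1 = (a - 1) + n by ring, Real.rpow_add hx0, Real.rpow_natCast]
      ring
    · rw [Set.indicator_of_notMem (by exact hx)]
      simp [_root_.betaPDFReal, if_neg hx]
  rw [h2, integral_indicator measurableSet_Ioo, ← integral_Ioc_eq_integral_Ioo,
    ← intervalIntegral.integral_of_le (by norm_num : (0:ℝ) ≤ 1),
    intervalIntegral.integral_const_mul]
  have hs : (0:ℝ) < a + n := by positivity
  have := realBetaIntegral hs hb
  rw [show a + (n:ℝ) - 1 = a + n - 1 from rfl] at this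
  rw [show (fun x : ℝ => x ^ (a + ↑n - 1) * (1 - x) ^ (b - 1))
      = (fun x : ℝ => x ^ ((a + ↑n) - 1) * (1 - x) ^ (b - 1)) from rfl, this]
  have hGa := Real.Gamma_pos_of_pos ha
  have hGb := Real.Gamma_pos_of_pos hb
  have hGab := Real.Gamma_pos_of_pos (show (0:ℝ) < a + b by linarith)
  have hGanb := Real.Gamma_pos_of_pos (show (0:ℝ) < a + ↑n + b by positivity)
  rw [show a + b + (n:ℝ) = a + ↑n + b by ring]
  field_simp

section BetaLawLemmas
variable {Ω : Type*} [MeasurableSpace Ω] {μ : Measure Ω} {X : Ω → ℝ} {a b : ℝ}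

lemma HasBetaLaw.integral_pow (h : HasBetaLaw μ X a b) (ha : 0 < a) (hb : 0 < b) (n : ℕ) :
    ∫ ω, X ω ^ n ∂μ
      = Real.Gamma (a+b) * Real.Gamma (a+n) / (Real.Gamma a * Real.Gamma (a+b+n)) := by
  rw [← betaMeasure_integral_pow ha hb n, ← h.2,
    integral_map h.1.aemeasurable (by fun_prop)]

lemma HasBetaLaw.integral_id (h : HasBetaLaw μ X a b) (ha : 0 < a) (hb : 0 < b) :
    ∫ ω, X ω ∂μ = a / (a + b) := by
  have := h.integral_pow ha hb 1
  simp only [pow_one, Nat.cast_one] at this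
  rw [this, Real.Gamma_add_one ha.ne', Real.Gamma_add_one (by positivity : a + b ≠ 0)]
  have hGa := Real.Gamma_pos_of_pos ha
  have hGab := Real.Gamma_pos_of_pos (show (0:ℝ) < a + b by linarith)
  field_simp

lemma HasBetaLaw.integral_sq (h : HasBetaLaw μ X a b) (ha : 0 < a) (hb : 0 < b) :
    ∫ ω, X ω ^ 2 ∂μ = a * (a+1) / ((a + b) * (a + b + 1)) := by
  have := h.integral_pow ha hb 2
  simp only [Nat.cast_ofNat] at this
  rw [this, show a + (2:ℝ) = (a + 1) + 1 by ring, show a + b + (2:ℝ) = (a + b + 1) + 1 by ring,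
    Real.Gamma_add_one (by positivity : a + 1 ≠ 0),
    Real.Gamma_add_one (by positivity : a + b + 1 ≠ 0),
    Real.Gamma_add_one ha.ne', Real.Gamma_add_one (by positivity : a + b ≠ 0)]
  have hGa := Real.Gamma_pos_of_pos ha
  have hGab := Real.Gamma_pos_of_pos (show (0:ℝ) < a + b by linarith)
  field_simp

lemma HasBetaLaw.ae_mem_Icc (h : HasBetaLaw μ X a b) :
    ∀ᵐ ω ∂μ, X ω ∈ Set.Icc (0:ℝ) 1 := by
  have hz : _root_.betaMeasure a b (Set.Icc (0:ℝ) 1)ᶜ = 0 := by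
    unfold _root_.betaMeasure
    rw [withDensity_apply _ measurableSet_Icc.compl]
    have : ∀ x ∈ (Set.Icc (0:ℝ) 1)ᶜ, ENNReal.ofReal (_root_.betaPDFReal a b x) = 0 := by
      intro x hx
      simp only [Set.mem_compl_iff, Set.mem_Icc, not_and_or, not_le] at hx
      have : ¬ (0 < x ∧ x < 1) := by rcases hx with h | h <;> intro ⟨h1, h2⟩ <;> linarith
      simp [_root_.betaPDFReal, if_neg this]
    rw [setLIntegral_congr_fun measurableSet_Icc.compl this]
    simp
  have h1 : ∀ᵐ y ∂(μ.map X), y ∈ Set.Icc (0:ℝ) 1 := by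
    rw [h.2, ae_iff]
    convert hz using 2
    rfl
  exact (ae_map_iff h.1.aemeasurable measurableSet_Icc).mp h1

end BetaLawLemmas

lemma prod_attachFin_val {M : Type*} [CommMonoid M] {r : ℕ} (s : Finset ℕ)
    (h : ∀ m ∈ s, m < r) (f : ℕ → M) :
    ∏ k ∈ s.attachFin h, f (k : ℕ) = ∏ k ∈ s, f k := by
  apply Finset.prod_bij' (i := fun (a : Fin r) _ => (a : ℕ))
    (j := fun a ha => (⟨a, h a ha⟩ : Fin r))
  all_goals intro a ha
  all_goals simp_all [Finset.mem_attachFin]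

theorem H2_multivariate_C {Ω : Type*} [MeasurableSpace Ω] (μ : Measure Ω)
    [IsProbabilityMeasure μ] (r : ℕ) (hr : 2 ≤ r) (α : ℕ → ℝ)
    (hα : ∀ i, 1 ≤ i → i ≤ r → 0 < α i) (V : ℕ → Ω → ℝ)
    (h0 : HasBetaLaw μ (V 0) 1 (α 1))
    (hk : ∀ k, 1 ≤ k → k ≤ r - 1 →
      HasBetaLaw μ (V k) (1 + ∑ j ∈ Finset.Icc 1 k, α j) (α (k + 1)))
    (hind : iIndepFun (fun k : Fin r => V k) μ)
    (i j : ℕ) (hi : 1 ≤ i) (hij : i < j) (hj : j ≤ r)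
    (Si Sj : Ω → ℝ) (hSi : Si = fun ω => ∏ k ∈ Finset.range (r - i + 1), V k ω)
    (hSj : Sj = fun ω => ∏ k ∈ Finset.range (r - j + 1), V k ω)
    (A B : ℝ) (hA : A = ∑ l ∈ Finset.Icc 1 (r - i + 1), α l)
    (hB : B = ∑ l ∈ Finset.Icc 1 (r - j + 1), α l) :
    (∫ ω, Si ω * Sj ω ∂μ) /
        ((∫ ω, Si ω ∂μ) + (∫ ω, Sj ω ∂μ) - (∫ ω, Si ω * Sj ω ∂μ)) *
        Real.sqrt ((2 * (∫ ω, Si ω ∂μ) / (∫ ω, Si ω ^ 2 ∂μ) - 1) *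
          (2 * (∫ ω, Sj ω ∂μ) / (∫ ω, Sj ω ^ 2 ∂μ) - 1)) =
      2 * Real.sqrt (1 + A) * (1 + B) ^ ((3 : ℝ) / 2) /
        (2 * (1 + B) ^ 2 + (2 + B) * (A - B)) := by
  classical
  set c : ℕ → ℝ := fun k => 1 + ∑ l ∈ Finset.Icc 1 k, α l with hc_def
  have hc_pos : ∀ k, k ≤ r → 0 < c k := by
    intro k hkr
    have : 0 ≤ ∑ l ∈ Finset.Icc 1 k, α l :=
      Finset.sum_nonneg fun l hl => by
        rw [Finset.mem_Icc] at hl; exact (hα l hl.1 (hl.2.trans hkr)).le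
    simp only [hc_def]; linarith
  have hc0 : c 0 = 1 := by simp [hc_def]
  have hc_succ : ∀ k, c (k+1) = c k + α (k+1) := by
    intro k
    simp only [hc_def]
    rw [Finset.sum_Icc_succ_top (by omega : 1 ≤ k + 1)]
    ring
  have hlaw : ∀ k, k ≤ r - 1 → HasBetaLaw μ (V k) (c k) (α (k+1)) := by
    intro k hk'
    rcases Nat.eq_zero_or_pos k with hk0 | hk0
    · subst hk0; simp only [hc0]; exact h0
    · simp only [hc_def]; exact hk k hk0 hk'
  have hVmeas : ∀ k, k ≤ r - 1 → Measurable (V k) := fun k hk' => (hlaw k hk').1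
  have hmean : ∀ k, k ≤ r - 1 → ∫ ω, V k ω ∂μ = c k / c (k+1) := by
    intro k hk'
    have h1 := (hlaw k hk').integral_id (hc_pos k (by omega)) (hα (k+1) (by omega) (by omega))
    rw [h1, hc_succ k]
  have hsq : ∀ k, k ≤ r - 1 → ∫ ω, V k ω ^ 2 ∂μ
      = c k * (c k + 1) / (c (k+1) * (c (k+1) + 1)) := by
    intro k hk'
    have h1 := (hlaw k hk').integral_sq (hc_pos k (by omega)) (hα (k+1) (by omega) (by omega))
    rw [h1, hc_succ k]
  have haeIcc : ∀ k, k ≤ r - 1 → ∀ᵐ ω ∂μ, V k ω ∈ Set.Icc (0:ℝ) 1 :=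
    fun k hk' => (hlaw k hk').ae_mem_Icc
  have hIntPow : ∀ k, k ≤ r - 1 → ∀ q : ℕ, Integrable (fun ω => V k ω ^ q) μ := by
    intro k hk' q
    apply Integrable.mono' (integrable_const (1:ℝ))
    · exact ((hVmeas k hk').pow_const q).aestronglyMeasurable
    · filter_upwards [haeIcc k hk'] with ω hω
      rw [Real.norm_eq_abs, abs_of_nonneg (pow_nonneg hω.1 q)]
      exact pow_le_one₀ hω.1 hω.2
  have hIntProd : ∀ (p : ℕ → ℕ) (n : ℕ), n ≤ r →
      Integrable (fun ω => ∏ k ∈ Finset.range n, V k ω ^ p k) μ := by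
    intro p n hn
    apply Integrable.mono' (integrable_const (1:ℝ))
    · apply Measurable.aestronglyMeasurable
      apply Finset.measurable_prod
      intro k hk'
      exact (hVmeas k (by rw [Finset.mem_range] at hk'; omega)).pow_const (p k)
    · have hall : ∀ᵐ ω ∂μ, ∀ k ∈ Finset.range n, V k ω ∈ Set.Icc (0:ℝ) 1 := by
        rw [Filter.eventually_all_finset]
        intro k hk'
        exact haeIcc k (by rw [Finset.mem_range] at hk'; omega)
      filter_upwards [hall] with ω hω
      rw [Real.norm_eq_abs,
        abs_of_nonneg (Finset.prod_nonneg fun k hk' => pow_nonneg (hω k hk').1 _)]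
      exact Finset.prod_le_one (fun k hk' => pow_nonneg (hω k hk').1 _)
        (fun k hk' => pow_le_one₀ (hω k hk').1 (hω k hk').2)
  have key : ∀ (p : ℕ → ℕ) (n : ℕ), n ≤ r →
      ∫ ω, ∏ k ∈ Finset.range n, V k ω ^ p k ∂μ
        = ∏ k ∈ Finset.range n, ∫ ω, V k ω ^ p k ∂μ := by
    intro p n
    induction n with
    | zero => intro _; simp
    | succ n ih =>
      intro hn
      have hn' : n ≤ r := by omega
      set W : Fin r → Ω → ℝ := fun k => (fun x : ℝ => x ^ p (k : ℕ)) ∘ V (k : ℕ) with hW_def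
      have hWindep : iIndepFun W μ :=
        hind.comp _ (fun k => measurable_id.pow_const (p (k:ℕ)))
      have hWmeas : ∀ k : Fin r, Measurable (W k) := by
        intro k
        have hk2 := k.isLt
        exact ((hVmeas k (by omega)).pow_const _)
      have hs : ∀ m ∈ Finset.range n, m < r := fun m hm => by
        rw [Finset.mem_range] at hm; omega
      have hnotmem : (⟨n, by omega⟩ : Fin r) ∉ (Finset.range n).attachFin hs := by
        rw [Finset.mem_attachFin]; simp
      have hindep := hWindep.indepFun_finsetProd_of_notMem hWmeas hnotmem
      have hprod : (∏ j' ∈ (Finset.range n).attachFin hs, W j')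
          = fun ω => ∏ k ∈ Finset.range n, V k ω ^ p k := by
        ext ω
        rw [Finset.prod_apply]
        exact prod_attachFin_val (Finset.range n) hs (fun k => V k ω ^ p k)
      rw [hprod] at hindep
      have heq : (W (⟨n, by omega⟩ : Fin r)) = fun ω => V n ω ^ p n := rfl
      rw [heq] at hindep
      have hint1 := hIntProd p n hn'
      have hint2 := hIntPow n (by omega) (p n)
      have hmul := ProbabilityTheory.IndepFun.integral_fun_mul_eq_mul_integral hindep hint1.aestronglyMeasurable hint2.aestronglyMeasurable
      calc ∫ ω, ∏ k ∈ Finset.range (n+1), V k ω ^ p k ∂μ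
          = ∫ ω, (∏ k ∈ Finset.range n, V k ω ^ p k) * (V n ω ^ p n) ∂μ := by
            simp_rw [Finset.prod_range_succ]
        _ = (∫ ω, ∏ k ∈ Finset.range n, V k ω ^ p k ∂μ) * ∫ ω, V n ω ^ p n ∂μ := hmul
        _ = ∏ k ∈ Finset.range (n+1), ∫ ω, V k ω ^ p k ∂μ := by
            rw [ih hn', Finset.prod_range_succ]
  have tel1 : ∀ N : ℕ, N ≤ r → ∏ k ∈ Finset.range N, (c k / c (k+1)) = 1 / c N := by
    intro N
    induction N with
    | zero => intro _; simp [hc0]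
    | succ N ih =>
      intro hN
      rw [Finset.prod_range_succ, ih (by omega)]
      have h1 := hc_pos N (by omega)
      have h2 := hc_pos (N+1) (by omega)
      field_simp
  have tel2 : ∀ N : ℕ, N ≤ r → ∏ k ∈ Finset.range N,
      (c k * (c k + 1) / (c (k+1) * (c (k+1) + 1))) = 2 / (c N * (c N + 1)) := by
    intro N
    induction N with
    | zero => intro _; norm_num [hc0]
    | succ N ih =>
      intro hN
      rw [Finset.prod_range_succ, ih (by omega)]
      have h1 := hc_pos N (by omega)
      have h2 := hc_pos (N+1) (by omega)
      have h3 : (0:ℝ) < c N + 1 := by linarith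
      have h4 : (0:ℝ) < c (N+1) + 1 := by linarith
      field_simp
  have tel3 : ∀ N : ℕ, (r - j + 1) ≤ N → N ≤ r →
      ∏ k ∈ Finset.Ico (r - j + 1) N, (c k / c (k+1)) = c (r - j + 1) / c N := by
    intro N
    induction N with
    | zero => intro h1 h2; omega
    | succ N ih =>
      intro h1 h2
      rcases Nat.lt_or_ge (r - j + 1) (N+1) with hlt | hge
      · have h1' : r - j + 1 ≤ N := by omega
        rw [Finset.prod_Ico_succ_top h1', ih h1' (by omega)]
        have ha1 := hc_pos N (by omega)
        have ha2 := hc_pos (N+1) (by omega)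
        have ha3 := hc_pos (r-j+1) (by omega)
        field_simp
      · have hNe : N + 1 = r - j + 1 := by omega
        rw [hNe]
        simp [div_self (hc_pos (r-j+1) (by omega)).ne']
  have hm_le : r - j + 1 ≤ r := by omega
  have hn_le : r - i + 1 ≤ r := by omega
  have hmn : r - j + 1 < r - i + 1 := by omega
  -- the five moments
  have ESi : ∫ ω, Si ω ∂μ = 1 / c (r - i + 1) := by
    simp only [hSi]
    have hkey := key (fun _ => 1) (r - i + 1) hn_le
    simp only [pow_one] at hkey
    rw [hkey, Finset.prod_congr rfl
        (fun k hk' => hmean k (by rw [Finset.mem_range] at hk'; omega)),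
      tel1 _ hn_le]
  have ESj : ∫ ω, Sj ω ∂μ = 1 / c (r - j + 1) := by
    simp only [hSj]
    have hkey := key (fun _ => 1) (r - j + 1) hm_le
    simp only [pow_one] at hkey
    rw [hkey, Finset.prod_congr rfl
        (fun k hk' => hmean k (by rw [Finset.mem_range] at hk'; omega)),
      tel1 _ hm_le]
  have ESi2 : ∫ ω, Si ω ^ 2 ∂μ = 2 / (c (r-i+1) * (c (r-i+1) + 1)) := by
    simp only [hSi]
    simp_rw [← Finset.prod_pow]
    have hkey := key (fun _ => 2) (r - i + 1) hn_le
    rw [hkey, Finset.prod_congr rfl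
        (fun k hk' => hsq k (by rw [Finset.mem_range] at hk'; omega)),
      tel2 _ hn_le]
  have ESj2 : ∫ ω, Sj ω ^ 2 ∂μ = 2 / (c (r-j+1) * (c (r-j+1) + 1)) := by
    simp only [hSj]
    simp_rw [← Finset.prod_pow]
    have hkey := key (fun _ => 2) (r - j + 1) hm_le
    rw [hkey, Finset.prod_congr rfl
        (fun k hk' => hsq k (by rw [Finset.mem_range] at hk'; omega)),
      tel2 _ hm_le]
  have hq : ∀ ω, Si ω * Sj ω
      = ∏ k ∈ Finset.range (r-i+1), V k ω ^ (if k < r-j+1 then 2 else 1) := by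
    intro ω
    simp only [hSi, hSj]
    have hsplit : ∏ k ∈ Finset.range (r-i+1), V k ω
        = (∏ k ∈ Finset.range (r-j+1), V k ω) * ∏ k ∈ Finset.Ico (r-j+1) (r-i+1), V k ω := by
      rw [Finset.range_eq_Ico, Finset.range_eq_Ico]
      exact (Finset.prod_Ico_consecutive _ (Nat.zero_le (r-j+1)) hmn.le).symm
    have hsplit2 : ∏ k ∈ Finset.range (r-i+1), V k ω ^ (if k < r-j+1 then 2 else 1)
        = (∏ k ∈ Finset.range (r-j+1), V k ω ^ 2)
          * ∏ k ∈ Finset.Ico (r-j+1) (r-i+1), V k ω := by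
      rw [Finset.range_eq_Ico,
        ← Finset.prod_Ico_consecutive _ (Nat.zero_le (r-j+1)) hmn.le,
        ← Finset.range_eq_Ico]
      congr 1
      · exact Finset.prod_congr rfl fun k hk' => by
          rw [Finset.mem_range] at hk'; rw [if_pos hk']
      · exact Finset.prod_congr rfl fun k hk' => by
          rw [Finset.mem_Ico] at hk'; rw [if_neg (by omega), pow_one]
    rw [hsplit, hsplit2, Finset.prod_pow]
    ring
  have ESiSj : ∫ ω, Si ω * Sj ω ∂μ = 2 / ((c (r-j+1) + 1) * c (r-i+1)) := by
    simp_rw [hq]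
    have hkey := key (fun k => if k < r-j+1 then 2 else 1) (r-i+1) hn_le
    rw [hkey]
    rw [Finset.range_eq_Ico,
      ← Finset.prod_Ico_consecutive _ (Nat.zero_le (r-j+1)) hmn.le,
      ← Finset.range_eq_Ico]
    have e1 : ∏ k ∈ Finset.range (r-j+1), ∫ ω, V k ω ^ (if k < r-j+1 then 2 else 1) ∂μ
        = 2 / (c (r-j+1) * (c (r-j+1) + 1)) := by
      have hc1 : ∀ k ∈ Finset.range (r-j+1),
          (∫ ω, V k ω ^ (if k < r-j+1 then 2 else 1) ∂μ)
            = c k * (c k + 1) / (c (k+1) * (c (k+1) + 1)) := by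
        intro k hk'
        rw [Finset.mem_range] at hk'
        rw [if_pos hk']
        exact hsq k (by omega)
      rw [Finset.prod_congr rfl hc1, tel2 _ hm_le]
    have e2 : ∏ k ∈ Finset.Ico (r-j+1) (r-i+1), ∫ ω, V k ω ^ (if k < r-j+1 then 2 else 1) ∂μ
        = c (r-j+1) / c (r-i+1) := by
      have hc2 : ∀ k ∈ Finset.Ico (r-j+1) (r-i+1),
          (∫ ω, V k ω ^ (if k < r-j+1 then 2 else 1) ∂μ) = c k / c (k+1) := by
        intro k hk'
        rw [Finset.mem_Ico] at hk'
        rw [if_neg (by omega)]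
        simp only [pow_one]
        exact hmean k (by omega)
      rw [Finset.prod_congr rfl hc2, tel3 _ hmn.le hn_le]
    rw [e1, e2]
    have hp1 := hc_pos (r-j+1) hm_le
    have hp2 := hc_pos (r-i+1) hn_le
    field_simp
  -- values of c
  have hcn : c (r-i+1) = 1 + A := by simp only [hc_def]; rw [hA]
  have hcm : c (r-j+1) = 1 + B := by simp only [hc_def]; rw [hB]
  rw [hcn] at ESi ESi2
  rw [hcm] at ESj ESj2
  rw [hcn, hcm] at ESiSj
  -- positivity facts
  have hA0 : 0 < A := by
    rw [hA]
    apply Finset.sum_pos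
    · intro l hl
      rw [Finset.mem_Icc] at hl
      exact hα l hl.1 (by omega)
    · exact ⟨1, Finset.mem_Icc.mpr ⟨le_refl 1, by omega⟩⟩
  have hB0 : 0 < B := by
    rw [hB]
    apply Finset.sum_pos
    · intro l hl
      rw [Finset.mem_Icc] at hl
      exact hα l hl.1 (by omega)
    · exact ⟨1, Finset.mem_Icc.mpr ⟨le_refl 1, by omega⟩⟩
  have hAB : B ≤ A := by
    rw [hA, hB]
    apply Finset.sum_le_sum_of_subset_of_nonneg
    · exact Finset.Icc_subset_Icc_right (by omega)
    · intro l hl _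
      rw [Finset.mem_Icc] at hl
      exact (hα l hl.1 (by omega)).le
  have h1A : (0:ℝ) < 1 + A := by linarith
  have h1B : (0:ℝ) < 1 + B := by linarith
  have h2A : (0:ℝ) < 2 + A := by linarith
  have h2B : (0:ℝ) < 2 + B := by linarith
  have hD : (0:ℝ) < 2*(1+B)^2 + (2+B)*(A-B) := by nlinarith
  rw [ESi, ESj, ESi2, ESj2, ESiSj]
  have harg1 : 2 * (1/(1+A)) / (2/((1+A)*(1+A+1))) - 1 = 1 + A := by
    field_simp; ring
  have harg2 : 2 * (1/(1+B)) / (2/((1+B)*(1+B+1))) - 1 = 1 + B := by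
    field_simp; ring
  rw [harg1, harg2]
  have hratio : (2/((1+B+1)*(1+A))) / (1/(1+A) + 1/(1+B) - 2/((1+B+1)*(1+A)))
      = 2*(1+B) / (2*(1+B)^2 + (2+B)*(A-B)) := by
    have hden : 1/(1+A) + 1/(1+B) - 2/((1+B+1)*(1+A))
        = (2*(1+B)^2 + (2+B)*(A-B)) / ((1+A)*(1+B)*(2+B)) := by
      field_simp
      ring
    rw [hden, div_div_eq_mul_div]
    congr 1
    field_simp
    ring
  rw [hratio]
  rw [show (1+B)^((3:ℝ)/2) = (1+B) * Real.sqrt (1+B) by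
    rw [show (3:ℝ)/2 = 1 + 1/2 by norm_num, Real.rpow_add h1B, Real.rpow_one,
      ← Real.sqrt_eq_rpow]]
  rw [Real.sqrt_mul h1A.le]
  field_simp
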